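/- For every integer r ≥ 1, every near-triangular 2r × 2r 0-1 matrix over GF(2) has rank at least r. -/
import Mathlib

open Matrix

lemma my_rank_add_le {K : Type*} [Field K] {m n : ℕ}
    (A B : Matrix (Fin m) (Fin n) K) : (A + B).rank ≤ A.rank + B.rank := by
  rw [Matrix.rank, Matrix.rank, Matrix.rank, Matrix.mulVecLin_add]
  have h : LinearMap.range (A.mulVecLin + B.mulVecLin) ≤
      LinearMap.range A.mulVecLin ⊔ LinearMap.range B.mulVecLin := by
    rintro x ⟨y, rfl⟩
    exact Submodule.add_mem_sup ⟨y, rfl⟩ ⟨y, rfl⟩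
  exact (Submodule.finrank_mono h).trans
    (Submodule.finrank_add_le_finrank_add_finrank _ _)

/-- For every integer `r ≥ 1`, every near-triangular `2r × 2r` 0-1 matrix over
GF(2) (entry 1 below the diagonal, 0 above the diagonal, arbitrary diagonal)
has rank at least `r`. -/
theorem stmt4 (r : ℕ) (hr : 1 ≤ r) (M : Matrix (Fin (2 * r)) (Fin (2 * r)) (ZMod 2))
    (hnear : ∀ i j : Fin (2 * r), (j < i → M i j = 1) ∧ (i < j → M i j = 0)) :
    r ≤ M.rank := by
  set N : Matrix (Fin (2 * r)) (Fin (2 * r)) (ZMod 2) :=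
    Matrix.of (fun i j => if i = j then 0 else 1) with hNdef
  have hsum : M + Mᵀ = N := by
    ext i j
    rcases lt_trichotomy i j with h | h | h
    · simp [hNdef, Matrix.transpose_apply, (hnear i j).2 h, (hnear j i).1 h, h.ne]
    · subst h
      simp [hNdef, Matrix.transpose_apply, CharTwo.add_self_eq_zero]
    · simp [hNdef, Matrix.transpose_apply, (hnear i j).1 h, (hnear j i).2 h, h.ne']
  have hJ : N = 1 + Matrix.of (fun _ _ => (1 : ZMod 2)) := by
    ext i j
    by_cases h : i = j
    · subst h; simp [hNdef, CharTwo.add_self_eq_zero]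
    · simp [hNdef, h, Matrix.one_apply_ne h]
  have hNN : N * N = 1 := by
    rw [hJ]
    set J : Matrix (Fin (2 * r)) (Fin (2 * r)) (ZMod 2) := Matrix.of (fun _ _ => 1) with hJdef
    have hJJ : J * J = 0 := by
      ext i j
      simp only [Matrix.mul_apply, hJdef, Matrix.of_apply, one_mul, Finset.sum_const,
        Finset.card_univ, Fintype.card_fin, smul_eq_mul, mul_one, Matrix.zero_apply]
      rw [nsmul_eq_mul, mul_one, Nat.cast_mul]
      have h2 : ((2 : ℕ) : ZMod 2) = 0 := by decide
      rw [h2, zero_mul]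
    have hJ2 : J + J = 0 := by ext i j; simp [CharTwo.add_self_eq_zero]
    calc (1 + J) * (1 + J) = 1 + (J + J) + J * J := by noncomm_ring
    _ = 1 := by rw [hJ2, hJJ]; simp
  have hunit : IsUnit N := ⟨⟨N, N, hNN, hNN⟩, rfl⟩
  have hrankN : N.rank = 2 * r := by
    rw [N.rank_of_isUnit hunit, Fintype.card_fin]
  have h1 : N.rank ≤ M.rank + Mᵀ.rank := hsum ▸ my_rank_add_le M Mᵀ
  rw [Matrix.rank_transpose, hrankN] at h1
  omega
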